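/- Let E, Z be Banach spaces, K ⊆ Z a closed convex cone, X ⊆ E convex, f : X → ℝ convex, g : X → Z K-convex. If the optimal value of the dual problem sup{ inf_{x∈X}{ f(x)+⟨u*, g(x)⟩ } : u* ∈ K⁺ } is finite, then 0 belongs to the norm closure of the feasible set A := { z ∈ Z : ∃ x ∈ X, g(x) ⪯_K z }. -/

import Mathlib

/-- if the dual optimal value is finite, then `0` lies in the
norm closure of the feasible set `A`. -/
theorem stmt_12
    {E Z : Type*} [NormedAddCommGroup E] [NormedSpace ℝ E] [CompleteSpace E]
    [NormedAddCommGroup Z] [NormedSpace ℝ Z] [CompleteSpace Z]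
    (K : Set Z) (hKclosed : IsClosed K) (hKconv : Convex ℝ K)
    (hKcone : ∀ c : ℝ, 0 ≤ c → ∀ z ∈ K, c • z ∈ K)
    (X : Set E) (hX : Convex ℝ X)
    (f : E → ℝ) (hf : ConvexOn ℝ X f)
    (g : E → Z)
    (hg : ∀ x₁ ∈ X, ∀ x₂ ∈ X, ∀ t ∈ Set.Icc (0:ℝ) 1,
      t • g x₁ + (1 - t) • g x₂ - g (t • x₁ + (1 - t) • x₂) ∈ K)
    (Kplus : Set (Z →L[ℝ] ℝ)) (hKplus : Kplus = {u | ∀ z ∈ K, 0 ≤ u z})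
    -- the dual optimal value
    (dval : EReal)
    (hdval : dval =
      sSup ((fun u => sInf ((fun x => ((f x + u (g x) : ℝ) : EReal)) '' X)) '' Kplus))
    (hfin : dval ≠ ⊤ ∧ dval ≠ ⊥)
    (A : Set Z) (hA : A = {z | ∃ x ∈ X, z - g x ∈ K}) :
    (0:Z) ∈ closure A := by
  by_contra h0
  have h0K : (0 : Z →L[ℝ] ℝ) ∈ Kplus := by rw [hKplus]; intro z hz; simp
  -- X is nonempty
  rcases X.eq_empty_or_nonempty with hXe | ⟨x₀, hx₀⟩
  · apply hfin.1
    rw [hdval, hXe]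
    simp only [Set.image_empty, sInf_empty]
    rw [Set.Nonempty.image_const ⟨0, h0K⟩, sSup_singleton]
  -- 0 ∈ K
  have hK0 : (0:Z) ∈ K := by
    have := hg x₀ hx₀ x₀ hx₀ 0 ⟨le_refl 0, zero_le_one⟩
    simpa using this
  -- K closed under addition
  have hKadd : ∀ a ∈ K, ∀ b ∈ K, a + b ∈ K := by
    intro a ha b hb
    have h := hKconv ha hb (by norm_num : (0:ℝ) ≤ 1/2) (by norm_num : (0:ℝ) ≤ 1/2)
      (by norm_num)
    have h2 := hKcone 2 (by norm_num) _ h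
    have : (2:ℝ) • ((1/2:ℝ) • a + (1/2:ℝ) • b) = a + b := by
      rw [smul_add, smul_smul, smul_smul]; norm_num
    rwa [this] at h2
  -- A is convex
  have hAconv : Convex ℝ A := by
    rw [hA]
    rintro z₁ ⟨x₁, hx₁, hk₁⟩ z₂ ⟨x₂, hx₂, hk₂⟩ a b ha hb hab
    refine ⟨a • x₁ + b • x₂, hX hx₁ hx₂ ha hb hab, ?_⟩
    have hb' : b = 1 - a := by linarith
    subst hb'
    have hg' := hg x₁ hx₁ x₂ hx₂ a ⟨ha, by linarith⟩
    have h1 := hKcone a ha _ hk₁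
    have h2 := hKcone (1-a) (by linarith) _ hk₂
    have h3 := hKadd _ (hKadd _ h1 _ h2) _ hg'
    have heq : a • (z₁ - g x₁) + (1 - a) • (z₂ - g x₂) +
        (a • g x₁ + (1 - a) • g x₂ - g (a • x₁ + (1 - a) • x₂)) =
        a • z₁ + (1 - a) • z₂ - g (a • x₁ + (1 - a) • x₂) := by module
    rwa [heq] at h3
  -- separation
  obtain ⟨φ, u, hφ0, hφA⟩ :=
    geometric_hahn_banach_point_closed hAconv.closure isClosed_closure h0
  have hu : 0 < u := by simpa using hφ0
  have hφA' : ∀ z ∈ A, u < φ z := fun z hz => hφA z (subset_closure hz)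
  have hgxA : ∀ x ∈ X, g x ∈ A := by
    intro x hx; rw [hA]; exact ⟨x, hx, by simpa using hK0⟩
  -- φ is nonnegative on K
  have hφK : ∀ k ∈ K, 0 ≤ φ k := by
    intro k hk
    by_contra hneg
    push_neg at hneg
    have hc0 : 0 < -φ k := by linarith
    have hz₀A : g x₀ ∈ A := hgxA x₀ hx₀
    set t : ℝ := (φ (g x₀) - u) / (-φ k) with ht_def
    have ht : 0 ≤ t := div_nonneg (by have := hφA' _ hz₀A; linarith) hc0.le
    have hzA : g x₀ + t • k ∈ A := by
      rw [hA]; exact ⟨x₀, hx₀, by simpa using hKcone t ht k hk⟩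
    have hlt := hφA' _ hzA
    rw [map_add, map_smul, smul_eq_mul] at hlt
    have heq : t * φ k = -(φ (g x₀) - u) := by
      rw [ht_def, div_mul_eq_mul_div, div_eq_iff hc0.ne']; ring
    linarith
  -- extract u₀ with finite inner inf
  have hS : ∃ u₀ ∈ Kplus, sInf ((fun x => ((f x + u₀ (g x) : ℝ) : EReal)) '' X) ≠ ⊥ := by
    by_contra hall
    push_neg at hall
    apply hfin.2
    rw [hdval, sSup_eq_bot]
    rintro a ⟨v, hv, rfl⟩
    exact hall v hv
  obtain ⟨u₀, hu₀K, hs₀⟩ := hS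
  set s₀ := sInf ((fun x => ((f x + u₀ (g x) : ℝ) : EReal)) '' X) with hs₀def
  have hs₀le : s₀ ≤ ((f x₀ + u₀ (g x₀) : ℝ) : EReal) :=
    sInf_le (Set.mem_image_of_mem _ hx₀)
  have hs₀top : s₀ ≠ ⊤ := by
    intro h; rw [h] at hs₀le
    exact (EReal.coe_ne_top _) (top_le_iff.mp hs₀le)
  set m : ℝ := s₀.toReal with hm_def
  have hm : (m : EReal) = s₀ := EReal.coe_toReal hs₀top hs₀
  have hmlb : ∀ x ∈ X, m ≤ f x + u₀ (g x) := by
    intro x hx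
    have h := sInf_le (Set.mem_image_of_mem (fun x => ((f x + u₀ (g x) : ℝ) : EReal)) hx)
    rw [← hs₀def, ← hm] at h
    have h2 : (m : EReal) ≤ ((f x + u₀ (g x) : ℝ) : EReal) := h
    exact_mod_cast h2
  have hu₀ : ∀ z ∈ K, 0 ≤ u₀ z := by rw [hKplus] at hu₀K; exact hu₀K
  -- dval is a real number
  set c : ℝ := dval.toReal with hc_def
  have hc : (c : EReal) = dval := EReal.coe_toReal hfin.1 hfin.2
  -- choose large t
  set t : ℝ := max 0 ((c - m)/u + 1) with ht_def
  have ht0 : 0 ≤ t := le_max_left _ _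
  have htu : c < m + t * u := by
    have h1 : (c - m)/u + 1 ≤ t := le_max_right _ _
    have h2 : (c - m) / u * u = c - m := div_mul_cancel₀ _ hu.ne'
    nlinarith
  have huK' : u₀ + t • φ ∈ Kplus := by
    rw [hKplus]
    intro z hz
    have h1 := hu₀ z hz
    have h2 := hφK z hz
    simp only [ContinuousLinearMap.add_apply, ContinuousLinearMap.coe_smul',
      Pi.smul_apply, smul_eq_mul]
    have := mul_nonneg ht0 h2
    linarith
  have key : ((m + t * u : ℝ) : EReal) ≤ dval := by
    rw [hdval]
    refine le_sSup_of_le (Set.mem_image_of_mem _ huK') ?_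
    refine le_sInf ?_
    rintro a ⟨x, hx, rfl⟩
    rw [EReal.coe_le_coe_iff]
    have h1 : m ≤ f x + u₀ (g x) := hmlb x hx
    have h2 : u ≤ φ (g x) := le_of_lt (hφA' _ (hgxA x hx))
    simp only [ContinuousLinearMap.add_apply, ContinuousLinearMap.coe_smul',
      Pi.smul_apply, smul_eq_mul]
    nlinarith [mul_le_mul_of_nonneg_left h2 ht0]
  rw [← hc, EReal.coe_le_coe_iff] at key
  linarith
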